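/- Let J be a finite index set, let s, b⋆ be real numbers, and let p, H : ℝ → ℝ and, for each j ∈ J, F_j, ψ_j : ℝ → ℝ. Assume p, H and each ψ_j are differentiable at b⋆, each F_j is differentiable at ψ_j(b⋆), and p(b⋆) > 0, H(b⋆) > 0, and F_j(ψ_j(b⋆)) > 0 for every j ∈ J. Define the selling probability q(b) = p(b) · H(b) · ∏_{j∈J} F_j(ψ_j(b)) and the expected utility U(b) = (s − b) · q(b). If b⋆ is a local maximum of U, then s ≠ b⋆ and the first-order condition holds: 1/(s − b⋆) = p′(b⋆)/p(b⋆) + H′(b⋆)/H(b⋆) + Σ_{j∈J} F_j′(ψ_j(b⋆)) · ψ_j′(b⋆) / F_j(ψ_j(b⋆)). -/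

import Mathlib

open Finset

/-- First-order condition of Proposition 1: at an interior local maximum of the
expected utility `U(b) = (s - b) * q(b)` with selling probability
`q(b) = p(b) * H(b) * ∏ j ∈ J, F j (ψ j b)`, we have `s ≠ b⋆` and
`1/(s - b⋆) = p'(b⋆)/p(b⋆) + H'(b⋆)/H(b⋆) + Σ_j F_j'(ψ_j(b⋆))ψ_j'(b⋆)/F_j(ψ_j(b⋆))`. -/
theorem stmt0 {ι : Type*} (J : Finset ι) (s bstar : ℝ)
    (p H : ℝ → ℝ) (F ψ : ι → ℝ → ℝ)
    (hp : DifferentiableAt ℝ p bstar) (hH : DifferentiableAt ℝ H bstar)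
    (hψ : ∀ j ∈ J, DifferentiableAt ℝ (ψ j) bstar)
    (hF : ∀ j ∈ J, DifferentiableAt ℝ (F j) (ψ j bstar))
    (hp0 : 0 < p bstar) (hH0 : 0 < H bstar)
    (hF0 : ∀ j ∈ J, 0 < F j (ψ j bstar))
    (hmax : IsLocalMax
      (fun b => (s - b) * (p b * H b * ∏ j ∈ J, F j (ψ j b))) bstar) :
    s ≠ bstar ∧
      1 / (s - bstar) =
        deriv p bstar / p bstar + deriv H bstar / H bstar +
          ∑ j ∈ J, deriv (F j) (ψ j bstar) * deriv (ψ j) bstar / F j (ψ j bstar) := by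
  classical
  set P : ℝ := ∏ j ∈ J, F j (ψ j bstar) with hP
  have hP0 : 0 < P := Finset.prod_pos hF0
  set S : ℝ := ∑ j ∈ J, (∏ k ∈ J.erase j, F k (ψ k bstar)) •
      (deriv (F j) (ψ j bstar) * deriv (ψ j) bstar) with hS
  -- derivative of the product factor
  have hprod : HasDerivAt (fun b => ∏ j ∈ J, F j (ψ j b)) S bstar := by
    have : HasDerivAt (∏ j ∈ J, (fun b => F j (ψ j b)) ·) S bstar := by
      apply HasDerivAt.fun_finsetProd
      intro j hj
      exact ((hF j hj).hasDerivAt).comp bstar ((hψ j hj).hasDerivAt)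
    simpa using this
  set q' : ℝ := deriv p bstar * H bstar * P + p bstar * deriv H bstar * P +
      p bstar * H bstar * S with hq'
  have hq : HasDerivAt (fun b => p b * H b * ∏ j ∈ J, F j (ψ j b)) q' bstar := by
    have h1 := (hp.hasDerivAt.mul hH.hasDerivAt).mul hprod
    refine h1.congr_deriv ?_
    rw [hq', Pi.mul_apply]; ring
  have hU : HasDerivAt (fun b => (s - b) * (p b * H b * ∏ j ∈ J, F j (ψ j b)))
      ((-1) * (p bstar * H bstar * P) + (s - bstar) * q') bstar := by
    have hs : HasDerivAt (fun b : ℝ => s - b) (-1) bstar := by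
      simpa using ((hasDerivAt_id bstar).const_sub s)
    exact hs.mul hq
  have hz : (-1) * (p bstar * H bstar * P) + (s - bstar) * q' = 0 := by
    have := hmax.deriv_eq_zero
    rwa [hU.deriv] at this
  have hqpos : 0 < p bstar * H bstar * P := by positivity
  have hsne : s ≠ bstar := by
    rintro rfl
    rw [sub_self, zero_mul, add_zero] at hz
    nlinarith
  refine ⟨hsne, ?_⟩
  have hsub : s - bstar ≠ 0 := sub_ne_zero.mpr hsne
  -- q' = q * RHS
  have hkey : q' = (p bstar * H bstar * P) *
      (deriv p bstar / p bstar + deriv H bstar / H bstar +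
        ∑ j ∈ J, deriv (F j) (ψ j bstar) * deriv (ψ j) bstar / F j (ψ j bstar)) := by
    rw [hq']
    have hsum : P * ∑ j ∈ J, deriv (F j) (ψ j bstar) * deriv (ψ j) bstar / F j (ψ j bstar)
        = S := by
      rw [hS, Finset.mul_sum]
      refine Finset.sum_congr rfl fun j hj => ?_
      have hFj : F j (ψ j bstar) ≠ 0 := (hF0 j hj).ne'
      have : P = F j (ψ j bstar) * ∏ k ∈ J.erase j, F k (ψ k bstar) := by
        rw [hP, ← Finset.mul_prod_erase J _ hj]
      rw [this]
      field_simp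
      ring
    rw [mul_add, mul_add, ← hsum]
    field_simp
  rw [hkey] at hz
  set R : ℝ := deriv p bstar / p bstar + deriv H bstar / H bstar +
      ∑ j ∈ J, deriv (F j) (ψ j bstar) * deriv (ψ j) bstar / F j (ψ j bstar) with hR
  have h2 : (p bstar * H bstar * P) * ((s - bstar) * R - 1) = 0 := by linear_combination hz
  have h3 : (s - bstar) * R - 1 = 0 := by
    rcases mul_eq_zero.mp h2 with h | h
    · exact absurd h hqpos.ne'
    · exact h
  rw [div_eq_iff hsub]
  linarith
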